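/- Let a ≥ 0, ε > 0 and t > 0. Then Σ_{n∈ℤ} Ḣ_n(t)² < 3 + 4/ε + 2π²/(9ε²) + 8 e^{4t/ε} Σ_{n∈ℤ} e^{-2εn²t}. -/

import Mathlib

set_option maxHeartbeats 1000000
open Real


/-- `h_n = (a + ε n²)/2`. -/
noncomputable def hcoef (a ε : ℝ) (n : ℤ) : ℝ := (a + ε * (n : ℝ) ^ 2) / 2

/-- The real-valued fundamental oscillator solution `H_n(t)`:
`e^{-h t} sinh(ω t)/ω` when `ω² = h² - n² > 0`,
`e^{-h t} sin(|ω| t)/|ω|` when `h² - n² < 0`, and `t e^{-h t}` when `h² = n²`. -/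
noncomputable def Hfun (a ε : ℝ) (n : ℤ) (t : ℝ) : ℝ :=
  if 0 < (hcoef a ε n) ^ 2 - (n : ℝ) ^ 2 then
    Real.exp (-(hcoef a ε n) * t) *
      Real.sinh (Real.sqrt ((hcoef a ε n) ^ 2 - (n : ℝ) ^ 2) * t) /
      Real.sqrt ((hcoef a ε n) ^ 2 - (n : ℝ) ^ 2)
  else if (hcoef a ε n) ^ 2 - (n : ℝ) ^ 2 < 0 then
    Real.exp (-(hcoef a ε n) * t) *
      Real.sin (Real.sqrt ((n : ℝ) ^ 2 - (hcoef a ε n) ^ 2) * t) /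
      Real.sqrt ((n : ℝ) ^ 2 - (hcoef a ε n) ^ 2)
  else Real.exp (-(hcoef a ε n) * t) * t

/-- `n̄ = 1 + ⌊2/ε⌋`. -/
noncomputable def nbar (ε : ℝ) : ℤ := 1 + ⌊(2 : ℝ) / ε⌋


lemma hasDerivAt_case1 (h w t : ℝ) :
    HasDerivAt (fun s => Real.exp (-h * s) * Real.sinh (w * s) / w)
      ((Real.exp (-h*t) * -h * Real.sinh (w*t) + Real.exp (-h*t) * (Real.cosh (w*t) * w)) / w) t := by
  have h1 : HasDerivAt (fun s : ℝ => -h * s) (-h) t := by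
    simpa using (hasDerivAt_id t).const_mul (-h)
  have h2 := h1.exp
  have h3 : HasDerivAt (fun s : ℝ => w * s) w t := by
    simpa using (hasDerivAt_id t).const_mul w
  have h4 : HasDerivAt (fun s : ℝ => Real.sinh (w*s)) (Real.cosh (w*t) * w) t :=
    (Real.hasDerivAt_sinh _).comp t h3
  exact (h2.mul h4).div_const w

lemma hasDerivAt_case2 (h w t : ℝ) :
    HasDerivAt (fun s => Real.exp (-h * s) * Real.sin (w * s) / w)
      ((Real.exp (-h*t) * -h * Real.sin (w*t) + Real.exp (-h*t) * (Real.cos (w*t) * w)) / w) t := by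
  have h1 : HasDerivAt (fun s : ℝ => -h * s) (-h) t := by
    simpa using (hasDerivAt_id t).const_mul (-h)
  have h2 := h1.exp
  have h3 : HasDerivAt (fun s : ℝ => w * s) w t := by
    simpa using (hasDerivAt_id t).const_mul w
  have h4 : HasDerivAt (fun s : ℝ => Real.sin (w*s)) (Real.cos (w*t) * w) t :=
    (Real.hasDerivAt_sin _).comp t h3
  exact (h2.mul h4).div_const w

lemma hasDerivAt_case3 (h t : ℝ) :
    HasDerivAt (fun s => Real.exp (-h * s) * s)
      (Real.exp (-h*t) * -h * t + Real.exp (-h*t) * 1) t := by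
  have h1 : HasDerivAt (fun s : ℝ => -h * s) (-h) t := by
    simpa using (hasDerivAt_id t).const_mul (-h)
  exact (h1.exp.mul (hasDerivAt_id t))

/-- hyperbolic case: exponential form of the derivative -/
lemma deriv_Hfun_hyp {a ε : ℝ} {n : ℤ} (hc : 0 < (hcoef a ε n) ^ 2 - (n : ℝ) ^ 2) (t : ℝ) :
    deriv (Hfun a ε n) t =
      ((hcoef a ε n + Real.sqrt ((hcoef a ε n)^2 - (n:ℝ)^2)) *
          Real.exp (-(hcoef a ε n + Real.sqrt ((hcoef a ε n)^2 - (n:ℝ)^2)) * t)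
        - (hcoef a ε n - Real.sqrt ((hcoef a ε n)^2 - (n:ℝ)^2)) *
          Real.exp (-(hcoef a ε n - Real.sqrt ((hcoef a ε n)^2 - (n:ℝ)^2)) * t))
        / (2 * Real.sqrt ((hcoef a ε n)^2 - (n:ℝ)^2)) := by
  set h := hcoef a ε n
  set w := Real.sqrt (h^2 - (n:ℝ)^2) with hw
  have hwpos : 0 < w := Real.sqrt_pos.mpr hc
  have hH : Hfun a ε n = fun s => Real.exp (-h * s) * Real.sinh (w * s) / w := by
    funext s; simp only [Hfun, if_pos (show 0 < hcoef a ε n ^ 2 - (n:ℝ)^2 from hc)]; rfl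
  rw [hH, (hasDerivAt_case1 h w t).deriv]
  have e1 : Real.exp (-(h - w) * t) = Real.exp (-h*t) * Real.exp (w*t) := by
    rw [← Real.exp_add]; ring_nf
  have e2 : Real.exp (-(h + w) * t) = Real.exp (-h*t) * Real.exp (-(w*t)) := by
    rw [← Real.exp_add]; ring_nf
  rw [Real.sinh_eq, Real.cosh_eq, e1, e2]
  field_simp
  ring

/-- upper bound: D·(β-α) = βe^{-βt} - αe^{-αt} ≤ (β-α) e^{-βt} -/
lemma core_upper {α β t : ℝ} (hα : 0 ≤ α) (hab : α ≤ β) (ht : 0 ≤ t) :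
    β * Real.exp (-β*t) - α * Real.exp (-α*t) ≤ (β - α) * Real.exp (-β*t) := by
  have h1 : Real.exp (-β*t) ≤ Real.exp (-α*t) :=
    Real.exp_le_exp.mpr (by nlinarith)
  nlinarith [mul_le_mul_of_nonneg_left h1 hα]

/-- lower bound 1 -/
lemma core_lower1 {α β t : ℝ} (hα : 0 ≤ α) (hab : α ≤ β) (ht : 0 ≤ t) :
    α * Real.exp (-α*t) - β * Real.exp (-β*t) ≤ (β - α) * (α * t * Real.exp (-α * t)) := by
  have h1 : α * Real.exp (-β*t) ≤ β * Real.exp (-β*t) :=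
    mul_le_mul_of_nonneg_right hab (Real.exp_nonneg _)
  have e : Real.exp (-β*t) = Real.exp (-α*t) * Real.exp (-((β-α)*t)) := by
    rw [← Real.exp_add]; ring_nf
  have h3 : 1 - Real.exp (-((β-α)*t)) ≤ (β-α)*t := by
    nlinarith [Real.add_one_le_exp (-((β-α)*t))]
  have h2 : Real.exp (-α*t) - Real.exp (-β*t) ≤ (β-α)*t * Real.exp (-α*t) := by
    rw [e]; nlinarith [Real.exp_nonneg (-α*t)]
  nlinarith [mul_le_mul_of_nonneg_left h2 hα]

/-- lower bound 2 -/
lemma core_lower2 {α β t : ℝ} (hα : 0 ≤ α) (hβ : 0 ≤ β) (ht : 0 ≤ t) :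
    α * Real.exp (-α*t) - β * Real.exp (-β*t) ≤ α := by
  have h1 : Real.exp (-α*t) ≤ 1 := Real.exp_le_one_iff.mpr (by nlinarith)
  nlinarith [mul_le_mul_of_nonneg_left h1 hα, mul_nonneg hβ (Real.exp_nonneg (-β*t))]

/-- x e^{-x} ≤ 1 -/
lemma xexp_le_one {x : ℝ} (hx : 0 ≤ x) : x * Real.exp (-x) ≤ 1 := by
  have h1 := Real.add_one_le_exp x
  have h2 := Real.exp_pos x
  have h3 : Real.exp (-x) = (Real.exp x)⁻¹ := Real.exp_neg x
  rw [h3]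
  rw [mul_inv_le_iff₀ h2]
  nlinarith

lemma hcoef_nonneg {a ε : ℝ} (ha : 0 ≤ a) (hε : 0 < ε) (n : ℤ) : 0 ≤ hcoef a ε n := by
  have : (0:ℝ) ≤ (n:ℝ)^2 := sq_nonneg _
  unfold hcoef; nlinarith

lemma abs_deriv_le_one {a ε : ℝ} (ha : 0 ≤ a) (hε : 0 < ε) (n : ℤ) {t : ℝ} (ht : 0 ≤ t) :
    |deriv (Hfun a ε n) t| ≤ 1 := by
  set h := hcoef a ε n with hdef
  have hh : 0 ≤ h := hcoef_nonneg ha hε n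
  rcases lt_trichotomy ((hcoef a ε n) ^ 2 - (n : ℝ) ^ 2) 0 with hc | hc | hc
  · -- oscillatory case
    set w := Real.sqrt ((n:ℝ)^2 - h^2) with hw
    have hwpos : 0 < w := Real.sqrt_pos.mpr (by rw [hdef] at *; linarith)
    have hH : Hfun a ε n = fun s => Real.exp (-h * s) * Real.sin (w * s) / w := by
      funext s; simp only [Hfun, if_neg (not_lt.mpr (le_of_lt hc)), if_pos hc]; rfl
    rw [hH, (hasDerivAt_case2 h w t).deriv]
    have hsin : |Real.sin (w*t)| ≤ w * t := by
      calc |Real.sin (w*t)| ≤ |w*t| := Real.abs_sin_le_abs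
        _ = w*t := abs_of_nonneg (by positivity)
    have hcos : |Real.cos (w*t)| ≤ 1 := Real.abs_cos_le_one _
    have hexp : 0 < Real.exp (-h*t) := Real.exp_pos _
    rw [abs_div, abs_of_pos hwpos]
    rw [div_le_one hwpos]
    have h1 : |Real.exp (-h*t) * -h * Real.sin (w*t) + Real.exp (-h*t) * (Real.cos (w*t) * w)|
        ≤ Real.exp (-h*t) * h * (w*t) + Real.exp (-h*t) * w := by
      calc |Real.exp (-h*t) * -h * Real.sin (w*t) + Real.exp (-h*t) * (Real.cos (w*t) * w)|
          ≤ |Real.exp (-h*t) * -h * Real.sin (w*t)| + |Real.exp (-h*t) * (Real.cos (w*t) * w)| :=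
            abs_add_le _ _
        _ ≤ Real.exp (-h*t) * h * (w*t) + Real.exp (-h*t) * w := by
            refine add_le_add ?_ ?_
            · rw [abs_mul, abs_mul, abs_of_pos hexp, abs_neg, abs_of_nonneg hh]
              exact mul_le_mul_of_nonneg_left hsin (by positivity)
            · rw [abs_mul, abs_mul, abs_of_pos hexp, abs_of_pos hwpos]
              calc Real.exp (-h*t) * (|Real.cos (w*t)| * w)
                  ≤ Real.exp (-h*t) * (1 * w) := by gcongr
                _ = Real.exp (-h*t) * w := by ring
    refine h1.trans ?_
    -- e^{-ht}(h w t + w) ≤ w  ⟺  e^{-ht}(ht+1) ≤ 1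
    have key : Real.exp (-h*t) * (h*t + 1) ≤ 1 := by
      have := Real.add_one_le_exp (h*t)
      have e : Real.exp (-h*t) = (Real.exp (h*t))⁻¹ := by rw [← Real.exp_neg]; ring_nf
      rw [e, inv_mul_le_iff₀ (Real.exp_pos _)]
      nlinarith
    nlinarith [mul_pos hexp hwpos]
  · -- critical case
    have hH : Hfun a ε n = fun s => Real.exp (-h * s) * s := by
      funext s; simp only [Hfun, if_neg (not_lt.mpr (le_of_eq hc)), if_neg (not_lt.mpr (le_of_eq hc.symm))]; rfl
    rw [hH, (hasDerivAt_case3 h t).deriv]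
    have : Real.exp (-h*t) * -h * t + Real.exp (-h*t) * 1 = Real.exp (-h*t) * (1 - h*t) := by ring
    rw [this, abs_mul, abs_of_pos (Real.exp_pos _)]
    have e : Real.exp (-h*t) = (Real.exp (h*t))⁻¹ := by rw [← Real.exp_neg]; ring_nf
    have h1 : |1 - h*t| ≤ Real.exp (h*t) := by
      rw [abs_le]
      constructor
      · nlinarith [Real.add_one_le_exp (h*t)]
      · nlinarith [Real.add_one_le_exp (h*t), mul_nonneg hh ht]
    rw [e, inv_mul_le_iff₀ (Real.exp_pos _)]
    nlinarith [Real.exp_pos (h*t)]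
  · -- hyperbolic case
    rw [deriv_Hfun_hyp hc t]
    set w := Real.sqrt ((hcoef a ε n)^2 - (n:ℝ)^2) with hw
    have hwpos : 0 < w := Real.sqrt_pos.mpr hc
    have hwh : w ≤ h := by
      rw [hw, hdef]
      calc Real.sqrt ((hcoef a ε n)^2 - (n:ℝ)^2) ≤ Real.sqrt ((hcoef a ε n)^2) :=
        Real.sqrt_le_sqrt (by nlinarith [sq_nonneg ((n:ℝ))])
      _ = hcoef a ε n := Real.sqrt_sq (hcoef_nonneg ha hε n)
    set α := h - w with hα
    set β := h + w with hβ
    have hα0 : 0 ≤ α := by rw [hα]; linarith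
    have hab : α ≤ β := by rw [hα, hβ]; linarith
    have hba : β - α = 2*w := by rw [hα, hβ]; ring
    rw [abs_div, abs_of_pos (by linarith : (0:ℝ) < 2*w), div_le_one (by linarith : (0:ℝ) < 2*w)]
    rw [abs_le]
    constructor
    · -- -(2w) ≤ βe^{-βt} - αe^{-αt}
      have h1 := core_lower1 hα0 hab ht
      have h2 : α * t * Real.exp (-α*t) ≤ 1 := by
        have : α * t * Real.exp (-α*t) = (α*t) * Real.exp (-(α*t)) := by ring_nf
        rw [this]; exact xexp_le_one (by positivity)
      rw [hba] at h1
      nlinarith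
    · have h1 := core_upper hα0 hab ht
      have h2 : Real.exp (-β*t) ≤ 1 := Real.exp_le_one_iff.mpr (by nlinarith)
      rw [hba] at h1
      nlinarith

/-- generic square decomposition for the overdamped derivative -/
lemma Dsq_le (α β w t : ℝ) (hα : 0 ≤ α) (hαβ : α ≤ β) (hw : β - α = 2*w) (h2w : 0 < w)
    (ht : 0 ≤ t) :
    ((β * Real.exp (-β*t) - α * Real.exp (-α*t)) / (2*w))^2
      ≤ (Real.exp (-β*t))^2 + (α/(2*w))^2 := by
  set D := (β * Real.exp (-β*t) - α * Real.exp (-α*t)) / (2*w) with hD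
  have hDup : D ≤ Real.exp (-β*t) := by
    rw [hD, div_le_iff₀ (by linarith)]
    have h1 := core_upper hα hαβ ht
    have h2 : (β - α) * Real.exp (-β*t) = Real.exp (-β*t) * (2*w) := by rw [hw]; ring
    linarith
  have hDlow : -D ≤ α/(2*w) := by
    rw [hD, ← neg_div, neg_sub,
      div_le_div_iff₀ (show (0:ℝ) < 2*w by linarith) (show (0:ℝ) < 2*w by linarith)]
    have h1 := core_lower2 (α := α) (β := β) (t := t) hα (by linarith) ht
    exact mul_le_mul_of_nonneg_right (by linarith) (by linarith)
  rcases le_or_gt 0 D with h0 | h0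
  · nlinarith [sq_nonneg (α/(2*w)), Real.exp_nonneg (-β*t)]
  · nlinarith [sq_nonneg (Real.exp (-β*t)), div_nonneg hα (by linarith : (0:ℝ) ≤ 2*w)]

lemma tail_bound {a ε : ℝ} (ha : 0 ≤ a) (hε : 0 < ε) {n : ℤ} (hn : nbar ε + 1 ≤ |n|)
    {t : ℝ} (ht : 0 < t) :
    (deriv (Hfun a ε n) t)^2 ≤
      Real.exp (4*t/ε) * Real.exp (-2*ε*(n:ℝ)^2*t)
      + (((n - nbar ε : ℤ) : ℝ)^2)⁻¹/(4*ε^2) + (((n + nbar ε : ℤ) : ℝ)^2)⁻¹/(4*ε^2) := by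
  -- basic numeric facts
  have hnb2 : 2/ε < ((nbar ε : ℤ) : ℝ) := by
    unfold nbar; push_cast
    have := Int.lt_floor_add_one ((2:ℝ)/ε)
    linarith
  have hnb1 : (1:ℝ) ≤ ((nbar ε : ℤ) : ℝ) := by
    have h0 : (1:ℤ) ≤ nbar ε := by
      unfold nbar
      have := Int.floor_nonneg.mpr (le_of_lt (by positivity : (0:ℝ) < 2/ε))
      omega
    exact_mod_cast h0
  have hN : ((nbar ε : ℤ) : ℝ) + 1 ≤ |(n:ℝ)| := by
    rw [← Int.cast_abs]; exact_mod_cast hn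
  have hNpos : (0:ℝ) < |(n:ℝ)| := by linarith
  have hεN : 2 < ε * |(n:ℝ)| := by
    have h1 : 2 < ((nbar ε : ℤ) : ℝ) * ε := (div_lt_iff₀ hε).mp hnb2
    nlinarith
  have hNsq : (n:ℝ)^2 = |(n:ℝ)|^2 := (sq_abs _).symm
  have hh2 : ε * |(n:ℝ)|^2 / 2 ≤ hcoef a ε n := by
    unfold hcoef; rw [hNsq] at *; nlinarith
  have hhN : |(n:ℝ)| < hcoef a ε n := by nlinarith
  have hc : 0 < (hcoef a ε n)^2 - (n:ℝ)^2 := by rw [hNsq]; nlinarith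
  rw [deriv_Hfun_hyp hc t]
  have hwsq : (Real.sqrt ((hcoef a ε n)^2 - (n:ℝ)^2))^2 = (hcoef a ε n)^2 - |(n:ℝ)|^2 := by
    rw [Real.sq_sqrt hc.le, hNsq]
  have hw0 : 0 < Real.sqrt ((hcoef a ε n)^2 - (n:ℝ)^2) := Real.sqrt_pos.mpr hc
  have hwh : Real.sqrt ((hcoef a ε n)^2 - (n:ℝ)^2) ≤ hcoef a ε n := by
    nlinarith [sq_nonneg (|(n:ℝ)|)]
  have step := Dsq_le (hcoef a ε n - Real.sqrt ((hcoef a ε n)^2 - (n:ℝ)^2))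
      (hcoef a ε n + Real.sqrt ((hcoef a ε n)^2 - (n:ℝ)^2))
      (Real.sqrt ((hcoef a ε n)^2 - (n:ℝ)^2)) t
      (by linarith) (by linarith) (by ring) hw0 ht.le
  refine step.trans ?_
  clear step
  -- now bound the two pieces; introduce short names
  set N := |(n:ℝ)| with hNdef
  set nbR := ((nbar ε : ℤ) : ℝ) with hnbRdef
  set h := hcoef a ε n with hdef
  set w := Real.sqrt (h^2 - (n:ℝ)^2) with hwdef
  set α := h - w with hαdef
  set β := h + w with hβdef
  set m := N - nbR with hmdef
  clear_value N nbR h w α β m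
  have hα0 : 0 ≤ α := by rw [hαdef]; linarith
  have hβh : h ≤ β := by rw [hβdef]; linarith
  have hβ0 : 0 < β := by linarith
  have hαβ : α * β = N^2 := by rw [hαdef, hβdef]; nlinarith
  have hαh : α * h ≤ N^2 := by
    have h1 : α * h ≤ α * β := mul_le_mul_of_nonneg_left hβh hα0
    rwa [hαβ] at h1
  have hαle : α ≤ 2/ε := by
    rw [le_div_iff₀ hε]
    have k1 : α * (ε * N^2/2) ≤ N^2 := le_trans (mul_le_mul_of_nonneg_left hh2 hα0) hαh
    nlinarith [mul_pos hNpos hNpos]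
  have hβge : ε*N^2 - 2/ε ≤ β := by
    have hb : β = 2*h - α := by rw [hαdef, hβdef]; ring
    rw [hb]; linarith
  have hm1 : (1:ℝ) ≤ m := by rw [hmdef]; linarith
  have hεnb : 2 ≤ ε * nbR := by
    have h1 : 2 < nbR * ε := (div_lt_iff₀ hε).mp hnb2
    linarith
  have hεm : ε * m ≤ ε * N - 2 := by
    have he : ε * m = ε*N - ε*nbR := by rw [hmdef]; ring
    linarith
  have hw2 : ε * m * N^2 ≤ w^2 := by
    have h1 : N^2 * ((ε*N/2)^2 - 1) ≤ h^2 - N^2 := by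
      nlinarith [mul_self_le_mul_self (by positivity : (0:ℝ) ≤ ε*N^2/2) hh2]
    have h2 : (ε*N - 2) ≤ (ε*N/2)^2 - 1 := by nlinarith [sq_nonneg (ε*N - 2)]
    nlinarith
  have hh2sq : ε * m * N^2 ≤ h^2 := by nlinarith
  -- piece 1
  have hup : (Real.exp (-β*t))^2 ≤ Real.exp (4*t/ε) * Real.exp (-2*ε*(n:ℝ)^2*t) := by
    rw [sq, ← Real.exp_add, ← Real.exp_add]
    apply Real.exp_le_exp.mpr
    rw [hNsq]
    have key := mul_le_mul_of_nonneg_right hβge ht.le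
    have e1 : (ε * N ^ 2 - 2 / ε) * t = ε*N^2*t - 2/ε*t := by ring
    rw [e1] at key
    have e2 : 4 * t / ε = 2 * (2/ε*t) := by ring
    linarith
  -- piece 2
  have hlow : (α/(2*w))^2 ≤ ((m^2)⁻¹)/(4*ε^2) := by
    have hC : α^2 * (ε^2*m^2) ≤ w^2 := by
      have hA : α^2 * h^2 ≤ (N^2)^2 := by
        nlinarith [mul_self_le_mul_self (mul_nonneg hα0 (by linarith : (0:ℝ) ≤ h)) hαh]
      have hB : (ε*m*N^2) * (ε*m*N^2) ≤ w^2 * h^2 :=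
        mul_le_mul hw2 hh2sq (by positivity) (sq_nonneg w)
      have hD : α^2 * (ε^2*m^2) * h^2 ≤ w^2 * h^2 := by
        nlinarith [mul_le_mul_of_nonneg_right hA (by positivity : (0:ℝ) ≤ ε^2*m^2), hB]
      have hhpos : (0:ℝ) < h^2 := pow_pos (by linarith : (0:ℝ) < h) 2
      exact le_of_mul_le_mul_right hD hhpos
    have heq : ((m^2)⁻¹)/(4*ε^2) = 1/(4*ε^2*m^2) := by
      field_simp
    have hp1 : (0:ℝ) < (2*w)^2 := pow_pos (by linarith) 2
    have hp2 : (0:ℝ) < 4*ε^2*m^2 := by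
      have := mul_pos (pow_pos hε 2) (pow_pos (show (0:ℝ) < m by linarith) 2)
      linarith
    rw [heq, div_pow, div_le_div_iff₀ hp1 hp2]
    nlinarith [hC]
  have hfinal : ((m^2)⁻¹)/(4*ε^2) ≤
      (((n - nbar ε : ℤ) : ℝ)^2)⁻¹/(4*ε^2) + (((n + nbar ε : ℤ) : ℝ)^2)⁻¹/(4*ε^2) := by
    rcases le_or_gt 0 n with hn0 | hn0
    · have hNn : N = (n:ℝ) := by rw [hNdef]; exact abs_of_nonneg (by exact_mod_cast hn0)
      have he : ((n - nbar ε : ℤ) : ℝ)^2 = m^2 := by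
        rw [hmdef, hNn, hnbRdef]; push_cast; try ring
      rw [he]
      have : (0:ℝ) ≤ (((n + nbar ε : ℤ) : ℝ)^2)⁻¹/(4*ε^2) := by positivity
      linarith
    · have hNn : N = -(n:ℝ) := by rw [hNdef, abs_of_neg (by exact_mod_cast hn0)]
      have he : ((n + nbar ε : ℤ) : ℝ)^2 = m^2 := by
        rw [hmdef, hNn, hnbRdef]; push_cast; try ring
      rw [he]
      have : (0:ℝ) ≤ (((n - nbar ε : ℤ) : ℝ)^2)⁻¹/(4*ε^2) := by positivity
      linarith
  linarith

noncomputable def auxA (ε : ℝ) (n : ℤ) : ℝ := if |n| ≤ nbar ε then 1 else 0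
noncomputable def auxB (ε t : ℝ) (n : ℤ) : ℝ :=
  Real.exp (4*t/ε) * Real.exp (-2*ε*(n:ℝ)^2*t)
noncomputable def auxC (ε : ℝ) (n : ℤ) : ℝ :=
  (((n - nbar ε : ℤ):ℝ)^2)⁻¹/(4*ε^2) + (((n + nbar ε : ℤ):ℝ)^2)⁻¹/(4*ε^2)

lemma nbar_nonneg {ε : ℝ} (hε : 0 < ε) : 1 ≤ nbar ε := by
  unfold nbar
  have := Int.floor_nonneg.mpr (le_of_lt (by positivity : (0:ℝ) < 2/ε))
  omega

lemma summable_auxA (ε : ℝ) : Summable (auxA ε) := by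
  apply summable_of_ne_finset_zero (s := Finset.Icc (-(nbar ε)) (nbar ε))
  intro b hb
  simp only [Finset.mem_Icc] at hb
  unfold auxA
  rw [if_neg (fun hc => hb (abs_le.mp hc))]

lemma tsum_auxA_le {ε : ℝ} (hε : 0 < ε) : ∑' n : ℤ, auxA ε n ≤ 3 + 4/ε := by
  have h0 : ∀ b ∉ Finset.Icc (-(nbar ε)) (nbar ε), auxA ε b = 0 := by
    intro b hb
    simp only [Finset.mem_Icc] at hb
    unfold auxA; rw [if_neg (fun hc => hb (abs_le.mp hc))]
  rw [tsum_eq_sum h0]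
  have h1 : ∀ b ∈ Finset.Icc (-(nbar ε)) (nbar ε), auxA ε b = 1 := by
    intro b hb
    simp only [Finset.mem_Icc] at hb
    unfold auxA; rw [if_pos (abs_le.mpr hb)]
  rw [Finset.sum_congr rfl h1, Finset.sum_const, Int.card_Icc]
  have hnb := nbar_nonneg hε
  have hcard : ((nbar ε + 1 - -(nbar ε)).toNat : ℝ) = 2*((nbar ε : ℤ):ℝ) + 1 := by
    have h2 : (nbar ε + 1 - -(nbar ε)) = 2*(nbar ε) + 1 := by ring
    rw [h2]
    have h3 : ((2*nbar ε + 1).toNat : ℤ) = 2*nbar ε + 1 := Int.toNat_of_nonneg (by omega)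
    have h4 : ((2*nbar ε + 1).toNat : ℝ) = (((2*nbar ε + 1 : ℤ)) : ℝ) := by exact_mod_cast congrArg (Int.cast : ℤ → ℝ) h3
    rw [h4]; push_cast; ring
  rw [nsmul_eq_mul, mul_one, hcard]
  have hfl : ((nbar ε : ℤ):ℝ) ≤ 1 + 2/ε := by
    unfold nbar; push_cast
    linarith [Int.floor_le ((2:ℝ)/ε)]
  calc 2*((nbar ε : ℤ):ℝ) + 1 ≤ 2*(1 + 2/ε) + 1 := by linarith
    _ = 3 + 4/ε := by ring

lemma summable_exp_sq {ε t : ℝ} (hε : 0 < ε) (ht : 0 < t) :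
    Summable (fun n : ℤ => Real.exp (-2*ε*(n:ℝ)^2*t)) := by
  have base : Summable (fun k : ℕ => Real.exp (-2*ε*(k:ℝ)^2*t)) := by
    apply Summable.of_nonneg_of_le (fun k => Real.exp_nonneg _)
      (f := fun k : ℕ => (Real.exp (-(2*ε*t)))^k)
    · intro k
      rw [← Real.exp_nat_mul]
      apply Real.exp_le_exp.mpr
      have hk : (k:ℝ) ≤ (k:ℝ)^2 := by
        rcases Nat.eq_zero_or_pos k with h | h
        · simp [h]
        · have : (1:ℝ) ≤ (k:ℝ) := by exact_mod_cast h
          nlinarith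
      nlinarith [mul_nonneg (mul_nonneg hε.le ht.le) (by linarith : (0:ℝ) ≤ (k:ℝ)^2 - (k:ℝ))]
    · apply summable_geometric_of_lt_one (Real.exp_nonneg _)
      rw [Real.exp_lt_one_iff]
      nlinarith [mul_pos hε ht]
  apply Summable.of_nat_of_neg
  · exact base
  · apply base.congr
    intro k
    congr 1
    push_cast
    ring
lemma summable_auxB {ε t : ℝ} (hε : 0 < ε) (ht : 0 < t) : Summable (auxB ε t) :=
  (summable_exp_sq hε ht).mul_left _

lemma tsum_auxB_eq (ε t : ℝ) :
    ∑' n : ℤ, auxB ε t n = Real.exp (4*t/ε) * ∑' n : ℤ, Real.exp (-2*ε*(n:ℝ)^2*t) := by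
  unfold auxB; exact tsum_mul_left

lemma summable_inv_sq_int : Summable (fun n : ℤ => ((n:ℝ)^2)⁻¹) := by
  have := (Real.summable_one_div_int_pow (p := 2)).mpr one_lt_two
  simpa [one_div] using this

lemma tsum_inv_sq_int : ∑' n : ℤ, ((n:ℝ)^2)⁻¹ = Real.pi^2/3 := by
  have h1 : HasSum (fun n : ℕ => 1/((n:ℝ))^2) (Real.pi^2/6) := hasSum_zeta_two
  have h2 : HasSum (fun n : ℕ => 1/(((n:ℝ))+1)^2) (Real.pi^2/6) := by
    have := (hasSum_nat_add_iff (f := fun n : ℕ => 1/((n:ℝ))^2) 1).mpr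
      (by simpa using h1)
    simpa using this
  rw [tsum_of_nat_of_neg_add_one]
  · have e1 : ∑' n : ℕ, (((n:ℤ):ℝ)^2)⁻¹ = Real.pi^2/6 := by
      rw [← h1.tsum_eq]
      apply tsum_congr; intro k; push_cast; rw [one_div]
    have e2 : ∑' n : ℕ, (((-(↑n + 1) : ℤ):ℝ)^2)⁻¹ = Real.pi^2/6 := by
      rw [← h2.tsum_eq]
      apply tsum_congr; intro k; push_cast; rw [one_div]; ring_nf
    rw [e1, e2]; ring
  · apply summable_inv_sq_int.comp_injective
    exact fun x y hxy => by exact_mod_cast hxy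
  · apply summable_inv_sq_int.comp_injective
    intro x y hxy
    simpa using hxy
lemma summable_shift_sub (k : ℤ) : Summable (fun n : ℤ => (((n - k : ℤ):ℝ)^2)⁻¹) := by
  have h := summable_inv_sq_int.comp_injective (Equiv.subRight k).injective
  exact h.congr (fun n => rfl)

lemma summable_shift_add (k : ℤ) : Summable (fun n : ℤ => (((n + k : ℤ):ℝ)^2)⁻¹) := by
  have h := summable_inv_sq_int.comp_injective (Equiv.addRight k).injective
  exact h.congr (fun n => rfl)

lemma tsum_shift_sub (k : ℤ) : ∑' n : ℤ, (((n - k : ℤ):ℝ)^2)⁻¹ = Real.pi^2/3 := by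
  rw [← tsum_inv_sq_int]
  exact (Equiv.subRight k).tsum_eq (fun n : ℤ => ((n:ℝ)^2)⁻¹)

lemma tsum_shift_add (k : ℤ) : ∑' n : ℤ, (((n + k : ℤ):ℝ)^2)⁻¹ = Real.pi^2/3 := by
  rw [← tsum_inv_sq_int]
  exact (Equiv.addRight k).tsum_eq (fun n : ℤ => ((n:ℝ)^2)⁻¹)

lemma summable_auxC (ε : ℝ) : Summable (auxC ε) := by
  unfold auxC
  exact ((summable_shift_sub (nbar ε)).div_const _).add ((summable_shift_add (nbar ε)).div_const _)

lemma tsum_auxC_lt {ε : ℝ} (hε : 0 < ε) : ∑' n : ℤ, auxC ε n < 2*Real.pi^2/(9*ε^2) := by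
  unfold auxC
  rw [Summable.tsum_add ((summable_shift_sub (nbar ε)).div_const _) ((summable_shift_add (nbar ε)).div_const _)]
  rw [tsum_div_const, tsum_div_const, tsum_shift_sub, tsum_shift_add]
  rw [← add_div, div_lt_div_iff₀ (by positivity) (by positivity)]
  nlinarith [Real.pi_pos, sq_nonneg Real.pi, mul_pos hε hε, sq_nonneg ε,
    mul_pos (mul_pos Real.pi_pos Real.pi_pos) (mul_pos hε hε)]

theorem stmt17 (a ε : ℝ) (ha : 0 ≤ a) (hε : 0 < ε) (t : ℝ) (ht : 0 < t) :
    Summable (fun n : ℤ => (deriv (Hfun a ε n) t) ^ 2) ∧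
    Summable (fun n : ℤ => Real.exp (-2 * ε * (n : ℝ) ^ 2 * t)) ∧
    (∑' n : ℤ, (deriv (Hfun a ε n) t) ^ 2) <
      3 + 4 / ε + 2 * Real.pi ^ 2 / (9 * ε ^ 2) +
        8 * Real.exp (4 * t / ε) * (∑' n : ℤ, Real.exp (-2 * ε * (n : ℝ) ^ 2 * t)) := by
  have hSB := summable_exp_sq (t := t) hε ht
  have hpt : ∀ n : ℤ, (deriv (Hfun a ε n) t)^2 ≤ auxA ε n + auxB ε t n + auxC ε n := by
    intro n
    by_cases hcase : |n| ≤ nbar ε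
    · have h1 := abs_deriv_le_one ha hε n ht.le
      have h2 : (deriv (Hfun a ε n) t)^2 ≤ 1 := by
        rw [← sq_abs]; nlinarith [abs_nonneg (deriv (Hfun a ε n) t)]
      have hB : 0 ≤ auxB ε t n := by unfold auxB; positivity
      have hC : 0 ≤ auxC ε n := by unfold auxC; positivity
      unfold auxA; rw [if_pos hcase]; linarith
    · have hn : nbar ε + 1 ≤ |n| := by omega
      have h1 := tail_bound ha hε hn ht
      unfold auxA auxB auxC; rw [if_neg hcase]; linarith
  have hSF : Summable (fun n : ℤ => auxA ε n + auxB ε t n + auxC ε n) :=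
    ((summable_auxA ε).add (summable_auxB hε ht)).add (summable_auxC ε)
  have hSf : Summable (fun n : ℤ => (deriv (Hfun a ε n) t)^2) :=
    Summable.of_nonneg_of_le (fun n => sq_nonneg _) hpt hSF
  refine ⟨hSf, hSB, ?_⟩
  have h1 : (∑' n : ℤ, (deriv (Hfun a ε n) t)^2)
      ≤ ∑' n : ℤ, (auxA ε n + auxB ε t n + auxC ε n) := Summable.tsum_le_tsum hpt hSf hSF
  have h2 : ∑' n : ℤ, (auxA ε n + auxB ε t n + auxC ε n)
      = (∑' n : ℤ, auxA ε n) + (∑' n : ℤ, auxB ε t n) + (∑' n : ℤ, auxC ε n) := by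
    rw [Summable.tsum_add ((summable_auxA ε).add (summable_auxB hε ht)) (summable_auxC ε),
        Summable.tsum_add (summable_auxA ε) (summable_auxB hε ht)]
  have h3 := tsum_auxA_le (ε := ε) hε
  have h4 := tsum_auxC_lt (ε := ε) hε
  have h5 := tsum_auxB_eq ε t
  have hΘ : 0 ≤ ∑' n : ℤ, Real.exp (-2*ε*(n:ℝ)^2*t) :=
    tsum_nonneg (fun n => Real.exp_nonneg _)
  have h6 : Real.exp (4*t/ε) * (∑' n : ℤ, Real.exp (-2*ε*(n:ℝ)^2*t))
      ≤ 8 * Real.exp (4*t/ε) * (∑' n : ℤ, Real.exp (-2*ε*(n:ℝ)^2*t)) := by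
    nlinarith [Real.exp_pos (4*t/ε)]
  linarith
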